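/- For m > d > 0 and a > 1/2, the inequality a > (d/m - ((m-d)/m)·ln(m/(m-d))) / (ln(m/(m-d)))² holds. -/

import Mathlib

lemma key_aux (t : ℝ) (ht : 0 < t) :
    t^2/2 + (1+t)*Real.exp (-t) - 1 > 0 := by
  set g : ℝ → ℝ := fun t => t^2/2 + (1+t)*Real.exp (-t) - 1 with hg
  have hderiv : ∀ x : ℝ, HasDerivAt g (x * (1 - Real.exp (-x))) x := by
    intro x
    have h1 : HasDerivAt (fun y : ℝ => y^2/2) x x := by
      simpa using ((hasDerivAt_pow 2 x).div_const 2)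
    have h2 : HasDerivAt (fun y : ℝ => Real.exp (-y)) (-Real.exp (-x)) x := by
      simpa [Function.comp_def] using (Real.hasDerivAt_exp (-x)).comp x (hasDerivAt_neg x)
    have h3 : HasDerivAt (fun y : ℝ => (1+y)*Real.exp (-y))
        (1 * Real.exp (-x) + (1+x) * (-Real.exp (-x))) x := by
      simpa [Pi.add_def, Pi.mul_def] using ((hasDerivAt_const x (1:ℝ)).add (hasDerivAt_id x)).mul h2
    have := (h1.add h3).sub_const 1
    refine (this.congr_deriv (by ring)).congr_of_eventuallyEq (Filter.Eventually.of_forall fun y => ?_)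
    simp [hg]
  have hmono : StrictMonoOn g (Set.Ici 0) := by
    apply strictMonoOn_of_deriv_pos (convex_Ici 0)
    · exact Continuous.continuousOn (by
        fun_prop)
    · intro x hx
      rw [interior_Ici] at hx
      rw [(hderiv x).deriv]
      have h1 : Real.exp (-x) < 1 := by
        rw [Real.exp_lt_one_iff]; linarith [hx.out]
      exact mul_pos hx.out (by linarith)
  have h0 : g 0 = 0 := by simp [hg]
  have := hmono (Set.self_mem_Ici) (Set.mem_Ici.mpr ht.le) ht
  rw [h0] at this
  exact this

theorem stmt_13 (m d a : ℝ) (hmd : m > d) (hd : d > 0) (ha : a > 1/2) :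
    a > (d/m - ((m - d)/m) * Real.log (m/(m - d))) / (Real.log (m/(m - d)))^2 := by
  have hm : 0 < m := lt_trans hd hmd
  have hmd' : 0 < m - d := by linarith
  have hratio : 1 < m / (m - d) := by
    rw [lt_div_iff₀ hmd']; linarith
  set t := Real.log (m/(m-d)) with hT
  have ht : 0 < t := Real.log_pos hratio
  have hexp : Real.exp (-t) = (m - d)/m := by
    rw [Real.exp_neg, hT, Real.exp_log (by positivity)]
    rw [inv_div]
  have hkey := key_aux t ht
  rw [hexp] at hkey
  have hrhs : (d/m - ((m - d)/m) * t) / t^2 < 1/2 := by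
    rw [div_lt_iff₀ (by positivity)]
    have hdm : d/m = 1 - (m-d)/m := by field_simp; ring
    nlinarith [hkey]
  linarith
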